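/- For the quasi-eternal non-Markovian model with parameters α > 0, t_0 ≥ 0, defined by A_{xy}(t) = e^{−2αt} and A_{yz}(t) = A_{zx}(t) = (e^{−t} cosh(t − t_0)/cosh(t_0))^α, the CPTP condition B_{xyz}(t) = 1 + A_{xy}(t) − 2A_{yz}(t) ≥ 0 holds for all t ≥ 0 if and only if t_0 ≥ (1/2) ln(2^{1/α} − 1) (equivalently 1 − 2(e^{2t_0}+1)^{−α} ≥ 0); the other two conditions B_{yzx}(t) = B_{zxy}(t) = 1 − e^{−2αt} ≥ 0 hold automatically. -/

import Mathlib

open Real Filter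

lemma wright_aux {β s : ℝ} (hβ : 1 ≤ β) (hs : 1 ≤ s) :
    (2:ℝ) ^ β - 1 ≤ (s + 1) ^ β - s ^ β := by
  rcases eq_or_lt_of_le hs with h | h
  · rw [← h]; norm_num
  · have hs0 : (0:ℝ) < s := by linarith
    have hconv := (convexOn_rpow hβ).2
    have h1 : ((1:ℝ)/s) • (1:ℝ) + ((s-1)/s) • (s+1) = s := by
      rw [smul_eq_mul, smul_eq_mul, div_mul_eq_mul_div, div_mul_eq_mul_div, ← add_div, div_eq_iff hs0.ne']; ring
    have h2 : ((s-1)/s) • (1:ℝ) + ((1:ℝ)/s) • (s+1) = 2 := by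
      rw [smul_eq_mul, smul_eq_mul, div_mul_eq_mul_div, div_mul_eq_mul_div, ← add_div, div_eq_iff hs0.ne']; ring
    have ha : (1:ℝ) ∈ Set.Ici (0:ℝ) := by norm_num
    have hb : (s+1) ∈ Set.Ici (0:ℝ) := by simp; linarith
    have hw1 : (0:ℝ) ≤ 1/s := by positivity
    have hw2 : (0:ℝ) ≤ (s-1)/s := by
      apply div_nonneg <;> linarith
    have hsum1 : (1:ℝ)/s + (s-1)/s = 1 := by field_simp; ring
    have hsum2 : (s-1)/s + (1:ℝ)/s = 1 := by field_simp; ring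
    have A := hconv ha hb hw1 hw2 hsum1
    have B := hconv ha hb hw2 hw1 hsum2
    rw [h1] at A
    rw [h2] at B
    simp only [one_rpow, smul_eq_mul] at A B
    have e1 : 1/s*(1:ℝ) + (s-1)/s*(1:ℝ) = 1 := by
      rw [mul_one, mul_one, hsum1]
    have e2 : (s-1)/s*(s+1)^β + 1/s*(s+1)^β = (s+1)^β := by
      rw [← add_mul, hsum2, one_mul]
    linarith [A, B, e1, e2]

lemma key_ineq {α c u : ℝ} (hα : 0 < α) (hc : 1 ≤ c) (h2 : 2 ≤ (c+1) ^ α)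
    (hu0 : 0 < u) (hu1 : u ≤ 1) :
    2 * ((1 + c * u) / (c + 1)) ^ α ≤ 1 + u ^ α := by
  have hc0 : (0:ℝ) < c + 1 := by linarith
  have hnum : (0:ℝ) ≤ 1 + c * u := by nlinarith
  rcases le_or_gt 1 α with h1α | h1α
  · -- α ≥ 1 : use (1+cu)/(c+1) ≤ (1+u)/2 and convexity
    have hd : (1 + c*u)/(c+1) ≤ (1+u)/2 := by
      rw [div_le_div_iff₀ hc0 (by norm_num)]
      nlinarith [mul_nonneg (sub_nonneg.2 hc) (sub_nonneg.2 hu1)]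
    have hstep1 : ((1 + c*u)/(c+1)) ^ α ≤ ((1+u)/2) ^ α :=
      Real.rpow_le_rpow (by positivity) hd hα.le
    have hconv := (convexOn_rpow h1α).2 (Set.mem_Ici.2 (by norm_num : (0:ℝ) ≤ 1))
      (Set.mem_Ici.2 hu0.le) (by norm_num : (0:ℝ) ≤ 1/2) (by norm_num : (0:ℝ) ≤ 1/2)
      (by norm_num)
    simp only [smul_eq_mul, one_rpow] at hconv
    have heq : (1:ℝ)/2 * 1 + 1/2 * u = (1+u)/2 := by ring
    rw [heq] at hconv
    nlinarith [hstep1, hconv]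
  · -- α < 1
    set β := α⁻¹ with hβ_def
    have hβ : 1 ≤ β := by
      rw [hβ_def, le_inv_comm₀ one_pos hα]
      linarith
    set m := (2:ℝ) ^ β with hm_def
    have hm1 : (1:ℝ) < m := by
      rw [hm_def]
      exact (Real.one_lt_rpow_iff (by norm_num)).2 (Or.inl ⟨one_lt_two, by positivity⟩)
    have hm0 : (0:ℝ) < m := by linarith
    have hm : m ≤ c + 1 := by
      rw [hm_def, hβ_def, Real.rpow_inv_le_iff_of_pos (by norm_num) hc0.le hα]
      exact h2
    have hmα : m ^ α = 2 := by
      rw [hm_def, hβ_def]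
      exact Real.rpow_inv_rpow (by norm_num) hα.ne'
    have hnum2 : (0:ℝ) ≤ 1 + (m-1)*u := by nlinarith
    have hstepA : (1 + c*u)/(c+1) ≤ (1 + (m-1)*u)/m := by
      rw [div_le_div_iff₀ hc0 hm0]
      nlinarith [mul_nonneg (sub_nonneg.2 hm) (sub_nonneg.2 hu1)]
    set v := u ^ α with hv_def
    have hv0 : 0 < v := Real.rpow_pos_of_pos hu0 α
    have hv1 : v ≤ 1 := Real.rpow_le_one hu0.le hu1 hα.le
    have hvu : v ^ β = u := by
      rw [hv_def, hβ_def]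
      exact Real.rpow_rpow_inv hu0.le hα.ne'
    have hs : 1 ≤ v⁻¹ := (one_le_inv₀ hv0).2 hv1
    have hw := wright_aux hβ hs
    have hvβ0 : (0:ℝ) < v ^ β := Real.rpow_pos_of_pos hv0 β
    have e3 : v ^ β * (v⁻¹ + 1) ^ β = (1 + v) ^ β := by
      rw [← Real.mul_rpow hv0.le (by positivity)]
      congr 1
      field_simp
    have e4 : v ^ β * (v⁻¹) ^ β = 1 := by
      rw [← Real.mul_rpow hv0.le (by positivity), mul_inv_cancel₀ hv0.ne', Real.one_rpow]
    have hcore : 1 + (m - 1) * u ≤ (1 + v) ^ β := by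
      have h5 := mul_le_mul_of_nonneg_left hw hvβ0.le
      rw [mul_sub, mul_sub, e3, e4, hvu, ← hm_def] at h5
      nlinarith [h5]
    have e5 : ((1+v)^β)^α = 1 + v := by
      rw [hβ_def]
      exact Real.rpow_inv_rpow (by positivity) hα.ne'
    have hfin : (1 + (m-1)*u) ^ α ≤ 1 + v := by
      rw [← e5]
      exact Real.rpow_le_rpow hnum2 hcore hα.le
    have hA : ((1+c*u)/(c+1))^α ≤ ((1+(m-1)*u)/m)^α :=
      Real.rpow_le_rpow (by positivity) hstepA hα.le
    have hB : ((1+(m-1)*u)/m)^α = (1+(m-1)*u)^α / 2 := by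
      rw [Real.div_rpow hnum2 hm0.le, hmα]
    rw [hv_def] at hfin
    nlinarith [hA, hB, hfin]

lemma A_eq (t₀ t : ℝ) : Real.exp (-t) * Real.cosh (t - t₀) / Real.cosh t₀
    = (1 + Real.exp (2*t₀) * Real.exp (-2*t)) / (Real.exp (2*t₀) + 1) := by
  have ha : (0:ℝ) < Real.exp t := Real.exp_pos t
  have hb : (0:ℝ) < Real.exp t₀ := Real.exp_pos t₀
  rw [Real.cosh_eq, Real.cosh_eq, show -(t - t₀) = t₀ - t by ring,
    Real.exp_sub, Real.exp_sub, Real.exp_neg, Real.exp_neg,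
    show (2:ℝ)*t₀ = t₀ + t₀ by ring, show (-2:ℝ)*t = -t + -t by ring,
    Real.exp_add, Real.exp_add, Real.exp_neg]
  field_simp


/-- The quasi-eternal non-Markovian model with `A_{xy}(t) = e^{-2αt}` and
`A_{yz}(t) = A_{zx}(t) = (e^{-t} cosh(t-t₀)/cosh t₀)^α`: the CPTP condition
`B_{xyz}(t) = 1 + A_{xy}(t) - 2A_{yz}(t) ≥ 0` for all `t ≥ 0` holds iff
`t₀ ≥ (1/2) ln(2^{1/α} - 1)`, equivalently iff `1 - 2(e^{2t₀}+1)^{-α} ≥ 0`;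
the remaining conditions `B_{yzx}(t) = B_{zxy}(t) = 1 - e^{-2αt} ≥ 0` hold
automatically. -/
theorem quasi_eternal_physicality (α t₀ : ℝ) (hα : 0 < α) (ht₀ : 0 ≤ t₀) :
    ((∀ t ≥ (0 : ℝ),
        0 ≤ 1 + Real.exp (-2 * α * t)
            - 2 * (Real.exp (-t) * Real.cosh (t - t₀) / Real.cosh t₀) ^ α) ↔
      (1/2) * Real.log ((2 : ℝ) ^ (1/α) - 1) ≤ t₀) ∧
    ((∀ t ≥ (0 : ℝ),
        0 ≤ 1 + Real.exp (-2 * α * t)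
            - 2 * (Real.exp (-t) * Real.cosh (t - t₀) / Real.cosh t₀) ^ α) ↔
      0 ≤ 1 - 2 * (Real.exp (2 * t₀) + 1) ^ (-α)) ∧
    (∀ t ≥ (0 : ℝ), 0 ≤ 1 - Real.exp (-2 * α * t)) := by
  have hc1 : (1:ℝ) ≤ Real.exp (2 * t₀) := by
    rw [show (1:ℝ) = Real.exp 0 by simp]
    exact Real.exp_le_exp.2 (by linarith)
  set c := Real.exp (2 * t₀) with hc_def
  have hc0 : (0:ℝ) < c + 1 := by positivity
  have hpow : (0:ℝ) < (c+1) ^ α := Real.rpow_pos_of_pos hc0 α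
  have triv : ∀ t ≥ (0:ℝ), 0 ≤ 1 - Real.exp (-2 * α * t) := by
    intro t ht
    have h1 : -2 * α * t ≤ 0 := by nlinarith
    have h2 := Real.exp_le_one_iff.2 h1
    linarith
  have cond2 : (0 ≤ 1 - 2 * (c + 1) ^ (-α)) ↔ 2 ≤ (c+1) ^ α := by
    rw [Real.rpow_neg hc0.le, sub_nonneg, ← div_eq_mul_inv, div_le_one hpow]
  have cond1 : ((1/2) * Real.log ((2:ℝ) ^ (1/α) - 1) ≤ t₀) ↔ 2 ≤ (c+1) ^ α := by
    have hm1 : (1:ℝ) < 2 ^ (1/α) :=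
      (Real.one_lt_rpow_iff (by norm_num)).2 (Or.inl ⟨one_lt_two, by positivity⟩)
    rw [show ((1/2) * Real.log ((2:ℝ) ^ (1/α) - 1) ≤ t₀ ↔
          Real.log ((2:ℝ) ^ (1/α) - 1) ≤ 2 * t₀) from ⟨fun h => by linarith, fun h => by linarith⟩,
        Real.log_le_iff_le_exp (by linarith), ← hc_def, sub_le_iff_le_add,
        show (1:ℝ)/α = α⁻¹ from one_div α,
        Real.rpow_inv_le_iff_of_pos (by norm_num) hc0.le hα]
  have main : (∀ t ≥ (0:ℝ),
        0 ≤ 1 + Real.exp (-2 * α * t)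
            - 2 * (Real.exp (-t) * Real.cosh (t - t₀) / Real.cosh t₀) ^ α) ↔
      2 ≤ (c+1) ^ α := by
    constructor
    · intro h
      have hlin : Tendsto (fun t : ℝ => -2 * α * t) atTop atBot := by
        have h1 : Tendsto (fun t : ℝ => (2*α) * t) atTop atTop :=
          Tendsto.const_mul_atTop (by positivity) tendsto_id
        have h2 : Tendsto (fun t : ℝ => -((2*α) * t)) atTop atBot :=
          tendsto_neg_atTop_atBot.comp h1
        exact h2.congr (by intro x; ring)
      have hlin' : Tendsto (fun t : ℝ => -2 * t) atTop atBot := by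
        have h1 : Tendsto (fun t : ℝ => (2:ℝ) * t) atTop atTop :=
          Tendsto.const_mul_atTop (by norm_num) tendsto_id
        have h2 : Tendsto (fun t : ℝ => -((2:ℝ) * t)) atTop atBot :=
          tendsto_neg_atTop_atBot.comp h1
        exact h2.congr (by intro x; ring)
      have htend2 : Tendsto (fun t : ℝ => Real.exp (-2 * α * t)) atTop (nhds 0) :=
        Real.tendsto_exp_atBot.comp hlin
      have htend1 : Tendsto (fun t : ℝ => Real.exp (-2 * t)) atTop (nhds 0) :=
        Real.tendsto_exp_atBot.comp hlin'
      have htend : Tendsto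
          (fun t : ℝ => 1 + Real.exp (-2 * α * t)
            - 2 * ((1 + c * Real.exp (-2 * t)) / (c + 1)) ^ α) atTop
          (nhds (1 + 0 - 2 * ((1 + c * 0) / (c + 1)) ^ α)) := by
        apply Tendsto.sub (tendsto_const_nhds.add htend2)
        apply Tendsto.const_mul
        apply Filter.Tendsto.rpow_const
        · exact (tendsto_const_nhds.add (htend1.const_mul c)).div_const _
        · exact Or.inr hα.le
      have hev : ∀ᶠ t in atTop, 0 ≤ 1 + Real.exp (-2 * α * t)
            - 2 * ((1 + c * Real.exp (-2 * t)) / (c + 1)) ^ α := by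
        filter_upwards [Filter.eventually_ge_atTop (0:ℝ)] with t ht
        have h3 := h t ht
        rw [A_eq, ← hc_def] at h3
        exact h3
      have hlim := ge_of_tendsto htend hev
      have hsimp : ((1 + c * 0) / (c + 1)) ^ α = ((c+1) ^ α)⁻¹ := by
        rw [mul_zero, add_zero, Real.div_rpow (by norm_num) hc0.le, Real.one_rpow, one_div]
      rw [hsimp] at hlim
      have h4 : 2 * ((c+1)^α)⁻¹ ≤ 1 := by linarith
      have h5 := mul_le_mul_of_nonneg_right h4 hpow.le
      rw [mul_assoc, inv_mul_cancel₀ hpow.ne', mul_one, one_mul] at h5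
      exact h5
    · intro h2 t ht
      have hu0 : 0 < Real.exp (-2 * t) := Real.exp_pos _
      have hu1 : Real.exp (-2 * t) ≤ 1 := Real.exp_le_one_iff.2 (by linarith)
      have hk := key_ineq hα hc1 h2 hu0 hu1
      rw [A_eq, ← hc_def]
      have he : Real.exp (-2 * α * t) = Real.exp (-2 * t) ^ α := by
        rw [← Real.exp_mul]
        congr 1
        ring
      rw [he]
      linarith [hk]
  exact ⟨main.trans cond1.symm, main.trans cond2.symm, triv⟩
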